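/- Identify ℝ⁴ with ℝ² × ℝ². A 2-dimensional subspace N ⊆ ℝ⁴ is totally null with respect to B if and only if there exists a linear map A : ℝ² → ℝ² preserving the Euclidean inner product on ℝ² (i.e. an orthogonal map A ∈ O(2)) such that N = {(v, A v) : v ∈ ℝ²} is the graph of A; moreover, such an orthogonal map A is unique. -/
import Mathlib


/-- The standard split signature bilinear form on ℝ⁴ = ℝ^(2,2). -/
def B (y z : Fin 4 → ℝ) : ℝ := y 0 * z 0 + y 1 * z 1 - y 2 * z 2 - y 3 * z 3

/-- A subspace of ℝ⁴ is totally null w.r.t. `B` if `B` vanishes identically on it. -/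
def TotallyNull (N : Submodule ℝ (Fin 4 → ℝ)) : Prop :=
  ∀ v ∈ N, ∀ w ∈ N, B v w = 0

/-- Identifying ℝ⁴ ≅ ℝ² × ℝ², the graph of a linear map `A : ℝ² → ℝ²`,
as a subset of ℝ⁴. -/
def graphSet (A : (Fin 2 → ℝ) →ₗ[ℝ] (Fin 2 → ℝ)) : Set (Fin 4 → ℝ) :=
  {y | ∃ v : Fin 2 → ℝ, y = ![v 0, v 1, A v 0, A v 1]}

/-- Projection onto the first two coordinates. -/
def p1 : (Fin 4 → ℝ) →ₗ[ℝ] (Fin 2 → ℝ) where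
  toFun y := ![y 0, y 1]
  map_add' y z := by funext i; fin_cases i <;> simp
  map_smul' c y := by funext i; fin_cases i <;> simp

/-- Projection onto the last two coordinates. -/
def p2 : (Fin 4 → ℝ) →ₗ[ℝ] (Fin 2 → ℝ) where
  toFun y := ![y 2, y 3]
  map_add' y z := by funext i; fin_cases i <;> simp
  map_smul' c y := by funext i; fin_cases i <;> simp

@[simp] lemma p1_apply (y : Fin 4 → ℝ) : p1 y = ![y 0, y 1] := rfl
@[simp] lemma p2_apply (y : Fin 4 → ℝ) : p2 y = ![y 2, y 3] := rfl

/-- The graph embedding as a linear map. -/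
def gmap (A : (Fin 2 → ℝ) →ₗ[ℝ] (Fin 2 → ℝ)) : (Fin 2 → ℝ) →ₗ[ℝ] (Fin 4 → ℝ) where
  toFun v := ![v 0, v 1, A v 0, A v 1]
  map_add' v w := by funext i; fin_cases i <;> simp
  map_smul' c v := by funext i; fin_cases i <;> simp

@[simp] lemma gmap_apply (A : (Fin 2 → ℝ) →ₗ[ℝ] (Fin 2 → ℝ)) (v : Fin 2 → ℝ) :
    gmap A v = ![v 0, v 1, A v 0, A v 1] := rfl

theorem stmt_6 (N : Submodule ℝ (Fin 4 → ℝ)) :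
    (Module.finrank ℝ N = 2 ∧ TotallyNull N) ↔
    ∃! A : (Fin 2 → ℝ) →ₗ[ℝ] (Fin 2 → ℝ),
      (∀ v w : Fin 2 → ℝ, A v 0 * A w 0 + A v 1 * A w 1 = v 0 * w 0 + v 1 * w 1) ∧
      (N : Set (Fin 4 → ℝ)) = graphSet A := by
  constructor
  · rintro ⟨hdim, hnull⟩
    set f : N →ₗ[ℝ] (Fin 2 → ℝ) := p1.comp N.subtype with hf
    have hinj : Function.Injective f := by
      rw [← LinearMap.ker_eq_bot]
      refine (Submodule.eq_bot_iff _).mpr ?_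
      intro n hn
      have hpn : p1 (n : Fin 4 → ℝ) = 0 := hn
      have h0 : (n : Fin 4 → ℝ) 0 = 0 := by
        have := congrFun hpn 0; simpa using this
      have h1 : (n : Fin 4 → ℝ) 1 = 0 := by
        have := congrFun hpn 1; simpa using this
      have hb := hnull n n.2 n n.2
      rw [B, h0, h1] at hb
      have h2 : (n : Fin 4 → ℝ) 2 = 0 := by
        nlinarith [mul_self_nonneg ((n : Fin 4 → ℝ) 2), mul_self_nonneg ((n : Fin 4 → ℝ) 3)]
      have h3 : (n : Fin 4 → ℝ) 3 = 0 := by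
        nlinarith [mul_self_nonneg ((n : Fin 4 → ℝ) 2), mul_self_nonneg ((n : Fin 4 → ℝ) 3)]
      ext i
      fin_cases i <;> simpa [h0, h1, h2, h3]
    have hrank : Module.finrank ℝ N = Module.finrank ℝ (Fin 2 → ℝ) := by
      rw [hdim, Module.finrank_fin_fun]
    let e : N ≃ₗ[ℝ] (Fin 2 → ℝ) := LinearMap.linearEquivOfInjective f hinj hrank
    have he_apply : ∀ n : N, e n = p1 (n : Fin 4 → ℝ) := fun n => rfl
    set A : (Fin 2 → ℝ) →ₗ[ℝ] (Fin 2 → ℝ) :=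
      (p2.comp N.subtype).comp (e.symm : (Fin 2 → ℝ) →ₗ[ℝ] N) with hA
    have hA_apply : ∀ v, A v = p2 ((e.symm v : N) : Fin 4 → ℝ) := fun v => rfl
    -- for n ∈ N, the coordinates
    have key : ∀ v : Fin 2 → ℝ,
        ((e.symm v : N) : Fin 4 → ℝ) 0 = v 0 ∧ ((e.symm v : N) : Fin 4 → ℝ) 1 = v 1 ∧
        A v 0 = ((e.symm v : N) : Fin 4 → ℝ) 2 ∧ A v 1 = ((e.symm v : N) : Fin 4 → ℝ) 3 := by
      intro v
      have h : p1 ((e.symm v : N) : Fin 4 → ℝ) = v := by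
        rw [← he_apply]; exact e.apply_symm_apply v
      refine ⟨?_, ?_, ?_, ?_⟩
      · have := congrFun h 0; simpa using this
      · have := congrFun h 1; simpa using this
      · rw [hA_apply]; simp
      · rw [hA_apply]; simp
    have hmem : ∀ v : Fin 2 → ℝ, ![v 0, v 1, A v 0, A v 1] ∈ N := by
      intro v
      obtain ⟨k0, k1, k2, k3⟩ := key v
      have : ![v 0, v 1, A v 0, A v 1] = ((e.symm v : N) : Fin 4 → ℝ) := by
        funext i
        fin_cases i <;> simp [k0, k1, k2, k3]
      rw [this]
      exact (e.symm v).2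
    have hgraph : (N : Set (Fin 4 → ℝ)) = graphSet A := by
      ext y
      constructor
      · intro hy
        refine ⟨p1 y, ?_⟩
        have h1 : e.symm (e ⟨y, hy⟩) = ⟨y, hy⟩ := e.symm_apply_apply _
        have h2 : e ⟨y, hy⟩ = p1 y := he_apply _
        have h3 : A (p1 y) = p2 y := by
          rw [hA_apply, ← h2, h1]
        have h30 : A ![y 0, y 1] 0 = y 2 := by have := congrFun h3 0; simpa using this
        have h31 : A ![y 0, y 1] 1 = y 3 := by have := congrFun h3 1; simpa using this
        funext i
        fin_cases i <;> simp [h30, h31]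
      · rintro ⟨v, rfl⟩
        exact hmem v
    have horth : ∀ v w : Fin 2 → ℝ,
        A v 0 * A w 0 + A v 1 * A w 1 = v 0 * w 0 + v 1 * w 1 := by
      intro v w
      have hb := hnull _ (hmem v) _ (hmem w)
      rw [B] at hb
      simp only [Matrix.cons_val_zero, Matrix.cons_val_one, Matrix.head_cons,
        Matrix.cons_val_two, Matrix.tail_cons, Matrix.cons_val_three] at hb
      linarith
    refine ⟨A, ⟨horth, hgraph⟩, ?_⟩
    rintro A' ⟨hA'orth, hA'graph⟩
    refine LinearMap.ext fun v => ?_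
    have hv : ![v 0, v 1, A' v 0, A' v 1] ∈ graphSet A := by
      rw [← hgraph, hA'graph]
      exact ⟨v, rfl⟩
    obtain ⟨u, hu⟩ := hv
    have e0 : v 0 = u 0 := by have := congrFun hu 0; simpa using this
    have e1 : v 1 = u 1 := by have := congrFun hu 1; simpa using this
    have huv : u = v := by funext i; fin_cases i <;> simp [← e0, ← e1]
    have e2 : A' v 0 = A u 0 := by have := congrFun hu 2; simpa using this
    have e3 : A' v 1 = A u 1 := by have := congrFun hu 3; simpa using this
    rw [huv] at e2 e3
    funext i
    fin_cases i <;> simp [e2, e3]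
  · rintro ⟨A, ⟨horth, hgraph⟩, -⟩
    have hginj : Function.Injective (gmap A) := by
      intro v w h
      have h0 : v 0 = w 0 := by have := congrFun h 0; simpa using this
      have h1 : v 1 = w 1 := by have := congrFun h 1; simpa using this
      funext i; fin_cases i <;> simp [h0, h1]
    have hN : N = LinearMap.range (gmap A) := by
      apply SetLike.coe_injective
      rw [hgraph]
      ext y
      constructor
      · rintro ⟨v, rfl⟩; exact ⟨v, rfl⟩
      · rintro ⟨v, rfl⟩; exact ⟨v, rfl⟩
    constructor
    · rw [hN, LinearMap.finrank_range_of_inj hginj, Module.finrank_fin_fun]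
    · intro x hx y hy
      have hx' : x ∈ graphSet A := by rw [← hgraph]; exact hx
      have hy' : y ∈ graphSet A := by rw [← hgraph]; exact hy
      obtain ⟨v, rfl⟩ := hx'
      obtain ⟨w, rfl⟩ := hy'
      rw [B]
      simp only [Matrix.cons_val_zero, Matrix.cons_val_one, Matrix.head_cons,
        Matrix.cons_val_two, Matrix.tail_cons, Matrix.cons_val_three]
      linarith [horth v w]
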